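/- For every odd integer L ≥ 1 there exists c > 0 (independent of L) such that ∑_{y=1}^{L} ( (1/2)H(y, y²) − (1/2)H(y+L+1, (y+L+1)²) ) ≥ c · log L, where H is the simple random walk heat kernel. -/

import Mathlib

/-- Heat kernel of the simple symmetric random walk on ℤ:
`H x t = 2^{-t} * choose t ((t+x)/2)` when `t ≥ 0`, `t ≡ x (mod 2)`, `|x| ≤ t`; else `0`. -/
noncomputable def H (x t : ℤ) : ℝ :=
  if 0 ≤ t ∧ (2 : ℤ) ∣ (t - x) ∧ |x| ≤ t then
    (2 : ℝ) ^ (-t) * (t.toNat.choose ((t + x) / 2).toNat)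
  else 0

/-- Influence of a deterministic right-step compared to a random step. -/
noncomputable def INF (y t : ℤ) : ℝ :=
  if t ≤ 0 then 0 else H (y + 1) (t - 1) - H y t

/-- `t_max y = ⌊(y² - 4)/3⌋ + 2`. -/
def tmax (y : ℤ) : ℤ := Int.fdiv (y ^ 2 - 4) 3 + 2



open Real Finset

set_option maxHeartbeats 2000000


noncomputable def w (m : ℕ) : ℝ := (Nat.centralBinom m : ℝ) / 4 ^ m

lemma cb_eq (m : ℕ) : Nat.centralBinom m = (2*m).choose m := rfl

lemma cb50_fact : Nat.centralBinom 50 * (Nat.factorial 50 * Nat.factorial 50) = Nat.factorial 100 := by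
  have h := Nat.choose_mul_factorial_mul_factorial (show 50 ≤ 100 by norm_num)
  have : (100:ℕ) - 50 = 50 := by norm_num
  rw [this] at h
  rw [cb_eq]
  show (100:ℕ).choose 50 * (Nat.factorial 50 * Nat.factorial 50) = Nat.factorial 100
  rw [← mul_assoc]
  exact h

lemma w50_sq_lb : (1/160:ℝ) ≤ (w 50)^2 := by
  have hnat : 16^50 * ((Nat.factorial 50 * Nat.factorial 50)^2) ≤ 160 * (Nat.factorial 100)^2 := by decide
  rw [← cb50_fact] at hnat
  have hF : (0:ℝ) < (((Nat.factorial 50 * Nat.factorial 50 : ℕ)):ℝ)^2 := by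
    have : 0 < Nat.factorial 50 * Nat.factorial 50 := by positivity
    positivity
  have hc : (16:ℝ)^50 * (((Nat.factorial 50 * Nat.factorial 50 : ℕ)):ℝ)^2
      ≤ (160 * (Nat.centralBinom 50 : ℝ)^2) * (((Nat.factorial 50 * Nat.factorial 50 : ℕ)):ℝ)^2 := by
    have hcast := (Nat.cast_le (α := ℝ)).2 hnat
    push_cast at hcast ⊢
    nlinarith [hcast]
  have h3 : (16:ℝ)^50 ≤ 160 * (Nat.centralBinom 50:ℝ)^2 := le_of_mul_le_mul_right hc hF
  rw [w, div_pow]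
  rw [le_div_iff₀ (by positivity)]
  have : ((4:ℝ)^50)^2 = 16^50 := by norm_num [← pow_mul]
  nlinarith [h3]

lemma w50_sq_ub : (w 50)^2 ≤ 634/100000 := by
  have hnat : 100000 * (Nat.factorial 100)^2 ≤ 634 * 16^50 * ((Nat.factorial 50 * Nat.factorial 50)^2) := by decide
  rw [← cb50_fact] at hnat
  have hF : (0:ℝ) < (((Nat.factorial 50 * Nat.factorial 50 : ℕ)):ℝ)^2 := by
    have : 0 < Nat.factorial 50 * Nat.factorial 50 := by positivity
    positivity
  have hc : (100000 * (Nat.centralBinom 50 : ℝ)^2) * (((Nat.factorial 50 * Nat.factorial 50 : ℕ)):ℝ)^2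
      ≤ (634 * (16:ℝ)^50) * (((Nat.factorial 50 * Nat.factorial 50 : ℕ)):ℝ)^2 := by
    have hcast := (Nat.cast_le (α := ℝ)).2 hnat
    push_cast at hcast ⊢
    nlinarith [hcast]
  have h3 : 100000 * (Nat.centralBinom 50:ℝ)^2 ≤ 634 * (16:ℝ)^50 := le_of_mul_le_mul_right hc hF
  rw [w, div_pow]
  rw [div_le_iff₀ (by positivity)]
  have : ((4:ℝ)^50)^2 = 16^50 := by norm_num [← pow_mul]
  nlinarith [h3]

lemma exp_le_inv_one_sub {x : ℝ} (h0 : 0 ≤ x) (h1 : x < 1) : Real.exp x ≤ (1 - x)⁻¹ := by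
  have h := Real.add_one_le_exp (-x)
  have hpos : (0:ℝ) < 1 - x := by linarith
  rw [inv_eq_one_div, le_div_iff₀ hpos]
  have h2 : Real.exp x * (1 - x) ≤ Real.exp x * Real.exp (-x) :=
    mul_le_mul_of_nonneg_left (by linarith) (Real.exp_pos x).le
  rw [← Real.exp_add, add_neg_cancel, Real.exp_zero] at h2
  exact h2

lemma exp_25_23 : Real.exp (25/23) ≤ 2.9772 := by
  have h1 : Real.exp (25/23) = Real.exp 1 * Real.exp (2/23) := by
    rw [← Real.exp_add]; norm_num
  have h2 : Real.exp (2/23) ≤ (1 - 2/23)⁻¹ := exp_le_inv_one_sub (by norm_num) (by norm_num)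
  have h3 := Real.exp_one_lt_d9.le
  rw [h1]
  calc Real.exp 1 * Real.exp (2/23) ≤ 2.7182818286 * (1 - 2/23)⁻¹ := by
        apply mul_le_mul h3 h2 (Real.exp_pos _).le (by norm_num)
    _ ≤ 2.9772 := by norm_num

lemma exp_9_7 : Real.exp (9/7) ≤ 3.70022 := by
  have h1 : Real.exp (9/7) = Real.exp 1 * (Real.exp (1/7) * Real.exp (1/7)) := by
    rw [← Real.exp_add, ← Real.exp_add]; norm_num
  have h2 : Real.exp (1/7) ≤ (1 - 1/7)⁻¹ := exp_le_inv_one_sub (by norm_num) (by norm_num)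
  have h3 := Real.exp_one_lt_d9.le
  have he7 : (0:ℝ) ≤ (1 - 1/7)⁻¹ := by norm_num
  rw [h1]
  have h4 : Real.exp (1/7) * Real.exp (1/7) ≤ (1-1/7)⁻¹ * (1-1/7)⁻¹ :=
    mul_le_mul h2 h2 (Real.exp_pos _).le he7
  calc Real.exp 1 * (Real.exp (1/7) * Real.exp (1/7)) ≤ 2.7182818286 * ((1-1/7)⁻¹ * (1-1/7)⁻¹) := by
        apply mul_le_mul h3 h4 (by positivity) (by norm_num)
    _ ≤ 3.70022 := by norm_num

lemma exp_10_11 : (2.47116:ℝ) ≤ Real.exp (10/11) := by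
  have h1 : Real.exp 1 = Real.exp (10/11) * Real.exp (1/11) := by
    rw [← Real.exp_add]; norm_num
  have h2 : Real.exp (1/11) ≤ (1 - 1/11)⁻¹ := exp_le_inv_one_sub (by norm_num) (by norm_num)
  have h3 := Real.exp_one_gt_d9.le
  have : (2.7182818283:ℝ) ≤ Real.exp (10/11) * (1 - 1/11)⁻¹ := by
    calc (2.7182818283:ℝ) ≤ Real.exp 1 := h3
      _ = Real.exp (10/11) * Real.exp (1/11) := h1
      _ ≤ Real.exp (10/11) * (1 - 1/11)⁻¹ :=
          mul_le_mul_of_nonneg_left h2 (Real.exp_pos _).le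
  nlinarith [this, Real.exp_pos (10/11)]

lemma exp_1_lb : (2.7182818283:ℝ) ≤ Real.exp 1 := Real.exp_one_gt_d9.le


lemma w_pos (m : ℕ) : 0 < w m :=
  div_pos (by exact_mod_cast m.centralBinom_pos) (by positivity)

lemma w_succ (m : ℕ) : w (m + 1) * (2 * m + 2) = w m * (2 * m + 1) := by
  have h := Nat.succ_mul_centralBinom_succ m
  have hc : ((m:ℝ) + 1) * (Nat.centralBinom (m+1)) = 2 * (2 * m + 1) * Nat.centralBinom m := by
    exact_mod_cast congrArg (Nat.cast : ℕ → ℝ) h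
  have h4m : (4:ℝ) ^ m ≠ 0 := by positivity
  rw [w, w, pow_succ]
  rw [div_mul_eq_mul_div, div_mul_eq_mul_div, div_eq_div_iff (by positivity) (by positivity)]
  linear_combination (2 * (4:ℝ)^m) * hc

lemma w_succ' (m : ℕ) : w (m+1) = w m * (2*m+1) / (2*m+2) := by
  have hs := w_succ m
  have h2 : (2*(m:ℝ)+2) ≠ 0 := by positivity
  field_simp
  linarith [hs]

lemma c_mono (M m : ℕ) (h : M ≤ m) : (w M)^2 * M ≤ (w m)^2 * m := by
  induction m, h using Nat.le_induction with
  | base => exact le_rfl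
  | succ n hn ih =>
    refine ih.trans ?_
    have hpos := w_pos n
    rw [w_succ' n, div_pow, mul_pow, div_mul_eq_mul_div, le_div_iff₀ (by positivity)]
    push_cast
    nlinarith [sq_nonneg (w n), hpos.le]

lemma d_mono (M m : ℕ) (h : M ≤ m) : (w m)^2 * (2*m+1) ≤ (w M)^2 * (2*M+1) := by
  induction m, h using Nat.le_induction with
  | base => exact le_rfl
  | succ n hn ih =>
    refine le_trans ?_ ih
    have hpos := w_pos n
    rw [w_succ' n, div_pow, mul_pow, div_mul_eq_mul_div, div_le_iff₀ (by positivity)]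
    push_cast
    nlinarith [sq_nonneg (w n), hpos.le]


lemma choose_rec (m j : ℕ) (hj : j ≤ m) :
    ((2*m).choose (m+j+1) : ℝ) * ((m:ℝ)+j+1) = ((2*m).choose (m+j) : ℝ) * ((m:ℝ) - j) := by
  have h := Nat.choose_succ_right_eq (2*m) (m+j)
  have h2 : 2*m - (m+j) = m - j := by omega
  rw [h2] at h
  have := congrArg (Nat.cast : ℕ → ℝ) h
  push_cast [Nat.cast_sub hj] at this
  linarith [this]

lemma choose_off_lower (m j : ℕ) (hj : j ≤ m) :
    (Nat.centralBinom m : ℝ) * Real.exp (-(j^2) / ((m:ℝ) - j + 1)) ≤ (2*m).choose (m+j) := by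
  induction j with
  | zero => simp [cb_eq]
  | succ j ih =>
    have hj' : j ≤ m := by omega
    have ihj := ih hj'
    have hmj : (0:ℝ) < (m:ℝ) - j := by
      have : (j:ℝ) + 1 ≤ m := by exact_mod_cast Nat.cast_le.2 hj
      linarith
    have hden : (0:ℝ) < (m:ℝ) + j + 1 := by positivity
    have hrec := choose_rec m j hj'
    have hcb : (0:ℝ) < Nat.centralBinom m := by exact_mod_cast m.centralBinom_pos
    have hd : (m:ℝ) - (↑(j+1):ℝ) + 1 = (m:ℝ) - j := by push_cast; ring
    rw [hd]
    have key : Real.exp (-((↑(j+1):ℝ)^2) / ((m:ℝ) - j)) * ((m:ℝ)+j+1)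
        ≤ Real.exp (-(j^2) / ((m:ℝ) - j + 1)) * ((m:ℝ) - j) := by
      have e1 : Real.exp (-((j:ℝ)^2) / ((m:ℝ) - j)) ≤ Real.exp (-(j^2) / ((m:ℝ) - j + 1)) := by
        apply Real.exp_le_exp.2
        rw [neg_div, neg_div, neg_le_neg_iff]
        apply div_le_div_of_nonneg_left (by positivity) hmj (by linarith)
      have e2 : Real.exp (-((↑(j+1):ℝ)^2) / ((m:ℝ) - j))
          = Real.exp (-((j:ℝ)^2) / ((m:ℝ) - j)) * Real.exp (-(2*(j:ℝ)+1) / ((m:ℝ) - j)) := by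
        rw [← Real.exp_add]
        congr 1
        push_cast
        field_simp
        ring
      have e3 : Real.exp (-(2*(j:ℝ)+1) / ((m:ℝ) - j)) * ((m:ℝ)+j+1) ≤ (m:ℝ) - j := by
        have hax := Real.add_one_le_exp ((2*(j:ℝ)+1) / ((m:ℝ) - j))
        have hexp : Real.exp (-(2*(j:ℝ)+1) / ((m:ℝ) - j))
            = (Real.exp ((2*(j:ℝ)+1) / ((m:ℝ) - j)))⁻¹ := by
          rw [← Real.exp_neg]; ring_nf
        have hxm : ((2*(j:ℝ)+1)/((m:ℝ)-(j:ℝ))) * ((m:ℝ)-(j:ℝ)) = 2*(j:ℝ)+1 :=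
          div_mul_cancel₀ _ hmj.ne'
        rw [hexp, inv_mul_le_iff₀ (Real.exp_pos _)]
        nlinarith [hax, hmj, hxm]
      calc Real.exp (-((↑(j+1):ℝ)^2) / ((m:ℝ) - j)) * ((m:ℝ)+j+1)
          = Real.exp (-((j:ℝ)^2) / ((m:ℝ) - j)) * (Real.exp (-(2*(j:ℝ)+1) / ((m:ℝ) - j)) * ((m:ℝ)+j+1)) := by
            rw [e2]; ring
        _ ≤ Real.exp (-((j:ℝ)^2) / ((m:ℝ) - j)) * ((m:ℝ) - j) :=
            mul_le_mul_of_nonneg_left e3 (Real.exp_pos _).le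
        _ ≤ Real.exp (-(j^2) / ((m:ℝ) - j + 1)) * ((m:ℝ) - j) :=
            mul_le_mul_of_nonneg_right e1 hmj.le
    have step : (Nat.centralBinom m : ℝ) * Real.exp (-((↑(j+1):ℝ)^2) / ((m:ℝ) - j)) * ((m:ℝ)+j+1)
        ≤ ((2*m).choose (m+j+1) : ℝ) * ((m:ℝ)+j+1) := by
      rw [hrec]
      calc (Nat.centralBinom m : ℝ) * Real.exp (-((↑(j+1):ℝ)^2) / ((m:ℝ) - j)) * ((m:ℝ)+j+1)
          = (Nat.centralBinom m : ℝ) * (Real.exp (-((↑(j+1):ℝ)^2) / ((m:ℝ) - j)) * ((m:ℝ)+j+1)) := by ring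
        _ ≤ (Nat.centralBinom m : ℝ) * (Real.exp (-(j^2) / ((m:ℝ) - j + 1)) * ((m:ℝ) - j)) :=
            mul_le_mul_of_nonneg_left key hcb.le
        _ = ((Nat.centralBinom m : ℝ) * Real.exp (-(j^2) / ((m:ℝ) - j + 1))) * ((m:ℝ) - j) := by ring
        _ ≤ ((2*m).choose (m+j) : ℝ) * ((m:ℝ) - j) := mul_le_mul_of_nonneg_right ihj hmj.le
    exact le_of_mul_le_mul_right step hden

lemma choose_off_upper (m j : ℕ) (hj : j ≤ m) :
    ((2*m).choose (m+j) : ℝ) ≤ (Nat.centralBinom m : ℝ) * Real.exp (-(j^2) / ((m:ℝ) + j)) := by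
  induction j with
  | zero => simp [cb_eq]
  | succ j ih =>
    have hj' : j ≤ m := by omega
    have ihj := ih hj'
    have hmj : (0:ℝ) < (m:ℝ) - j := by
      have : (j:ℝ) + 1 ≤ m := by exact_mod_cast Nat.cast_le.2 hj
      linarith
    have hden : (0:ℝ) < (m:ℝ) + j + 1 := by positivity
    have hrec := choose_rec m j hj'
    have hcb : (0:ℝ) < Nat.centralBinom m := by exact_mod_cast m.centralBinom_pos
    have hd : (m:ℝ) + (↑(j+1):ℝ) = (m:ℝ) + j + 1 := by push_cast; ring
    rw [hd]
    have key : Real.exp (-(j^2) / ((m:ℝ) + j)) * ((m:ℝ) - j)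
        ≤ Real.exp (-((↑(j+1):ℝ)^2) / ((m:ℝ) + j + 1)) * ((m:ℝ)+j+1) := by
      have e1 : Real.exp (-((j:ℝ)^2) / ((m:ℝ) + j)) ≤ Real.exp (-(j^2) / ((m:ℝ) + j + 1)) := by
        apply Real.exp_le_exp.2
        rw [neg_div, neg_div, neg_le_neg_iff]
        apply div_le_div_of_nonneg_left (by positivity)
          (by linarith [(Nat.cast_nonneg j : (0:ℝ) ≤ j)]) (by linarith)
      have e2 : Real.exp (-((↑(j+1):ℝ)^2) / ((m:ℝ) + j + 1))
          = Real.exp (-((j:ℝ)^2) / ((m:ℝ) + j + 1)) * Real.exp (-(2*(j:ℝ)+1) / ((m:ℝ) + j + 1)) := by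
        rw [← Real.exp_add]
        congr 1
        push_cast
        field_simp
        ring
      have e3 : (m:ℝ) - j ≤ Real.exp (-(2*(j:ℝ)+1) / ((m:ℝ) + j + 1)) * ((m:ℝ)+j+1) := by
        have hax := Real.add_one_le_exp (-((2*(j:ℝ)+1) / ((m:ℝ) + j + 1)))
        have hxm : ((2*(j:ℝ)+1)/((m:ℝ)+(j:ℝ)+1)) * ((m:ℝ)+(j:ℝ)+1) = 2*(j:ℝ)+1 :=
          div_mul_cancel₀ _ hden.ne'
        have : (-((2*(j:ℝ)+1) / ((m:ℝ) + j + 1)) + 1) * ((m:ℝ)+j+1)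
            ≤ Real.exp (-((2*(j:ℝ)+1) / ((m:ℝ) + j + 1))) * ((m:ℝ)+j+1) :=
          mul_le_mul_of_nonneg_right hax hden.le
        have heq : (-((2*(j:ℝ)+1) / ((m:ℝ) + j + 1)) + 1) * ((m:ℝ)+j+1) = (m:ℝ) - j := by
          field_simp
          ring
        have h5 : -(2*(j:ℝ)+1) / ((m:ℝ)+(j:ℝ)+1) = -((2*(j:ℝ)+1) / ((m:ℝ)+(j:ℝ)+1)) :=
          neg_div _ _
        rw [h5]
        linarith [this, heq.symm.le]
      calc Real.exp (-(j^2) / ((m:ℝ) + j)) * ((m:ℝ) - j)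
          ≤ Real.exp (-(j^2) / ((m:ℝ) + j + 1)) * ((m:ℝ) - j) :=
            mul_le_mul_of_nonneg_right e1 hmj.le
        _ ≤ Real.exp (-(j^2) / ((m:ℝ) + j + 1)) * (Real.exp (-(2*(j:ℝ)+1) / ((m:ℝ) + j + 1)) * ((m:ℝ)+j+1)) :=
            mul_le_mul_of_nonneg_left e3 (Real.exp_pos _).le
        _ = Real.exp (-((↑(j+1):ℝ)^2) / ((m:ℝ) + j + 1)) * ((m:ℝ)+j+1) := by
            rw [e2]; ring
    have step : ((2*m).choose (m+j+1) : ℝ) * ((m:ℝ)+j+1)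
        ≤ ((Nat.centralBinom m : ℝ) * Real.exp (-((↑(j+1):ℝ)^2) / ((m:ℝ) + j + 1))) * ((m:ℝ)+j+1) := by
      rw [hrec]
      calc ((2*m).choose (m+j) : ℝ) * ((m:ℝ) - j)
          ≤ ((Nat.centralBinom m : ℝ) * Real.exp (-(j^2) / ((m:ℝ) + j))) * ((m:ℝ) - j) :=
            mul_le_mul_of_nonneg_right ihj hmj.le
        _ = (Nat.centralBinom m : ℝ) * (Real.exp (-(j^2) / ((m:ℝ) + j)) * ((m:ℝ) - j)) := by ring
        _ ≤ (Nat.centralBinom m : ℝ) * (Real.exp (-((↑(j+1):ℝ)^2) / ((m:ℝ) + j + 1)) * ((m:ℝ)+j+1)) :=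
            mul_le_mul_of_nonneg_left key hcb.le
        _ = ((Nat.centralBinom m : ℝ) * Real.exp (-((↑(j+1):ℝ)^2) / ((m:ℝ) + j + 1))) * ((m:ℝ)+j+1) := by ring
    exact le_of_mul_le_mul_right step hden

lemma cb_w (m : ℕ) : (Nat.centralBinom m : ℝ) = w m * 4 ^ m := by
  rw [w]; field_simp

lemma sq_exp (x : ℝ) : (Real.exp x)^2 = Real.exp (2*x) := by
  rw [sq, ← Real.exp_add]; ring_nf

lemma exp_inv_lb {a b : ℝ} (hb : 0 < b) (h : Real.exp a ≤ b) : b⁻¹ ≤ Real.exp (-a) := by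
  rw [Real.exp_neg]
  exact inv_anti₀ (Real.exp_pos a) h

lemma exp_inv_ub {a b : ℝ} (h : b ≤ Real.exp a) (hb : 0 < b) : Real.exp (-a) ≤ b⁻¹ := by
  rw [Real.exp_neg]
  exact inv_anti₀ hb h

-- EVEN LOWER
lemma even_lower (j : ℕ) (hj : 5 ≤ j) :
    (2/5:ℝ) * 4^(2*j^2) ≤ (2*(j:ℝ)) * ((2*(2*j^2)).choose (2*j^2 + j)) := by
  have hjr : (5:ℝ) ≤ (j:ℝ) := by exact_mod_cast hj
  set m := 2*j^2 with hm
  have hmr : (m:ℝ) = 2*(j:ℝ)^2 := by rw [hm]; push_cast; ring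
  have hj2 : 25 ≤ j^2 := by calc 25 = 5^2 := by norm_num
                                _ ≤ j^2 := Nat.pow_le_pow_left hj 2
  have hjm : j ≤ m := by
    have := Nat.le_self_pow (show 2 ≠ 0 by norm_num) j
    omega
  have h50 : 50 ≤ m := by omega
  have h1 := choose_off_lower m j hjm
  have hcmono := c_mono 50 m h50
  have hwlb := w50_sq_lb
  have hwpos := w_pos m
  have hjmr : (j:ℝ) ≤ (m:ℝ) := by exact_mod_cast hjm
  have hden : (0:ℝ) < (m:ℝ) - (j:ℝ) + 1 := by linarith
  set E := Real.exp (-((j:ℝ)^2) / ((m:ℝ) - (j:ℝ) + 1)) with hE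
  have hEpos : 0 < E := Real.exp_pos _
  have hq : (2/5:ℝ) ≤ 2*(j:ℝ) * w m * E := by
    have hqpos : (0:ℝ) ≤ 2*(j:ℝ) * w m * E := by positivity
    refine le_of_pow_le_pow_left₀ (n := 2) (by norm_num) hqpos ?_
    have hsq : (2*(j:ℝ) * w m * E)^2 = 2 * ((w m)^2 * m) * E^2 := by rw [hmr]; ring
    rw [hsq]
    have hE2 : Real.exp (-(25/23)) ≤ E^2 := by
      rw [hE, sq_exp]
      apply Real.exp_le_exp.2
      have heq : 2 * (-((j:ℝ)^2) / ((m:ℝ) - (j:ℝ) + 1)) = -(2*(j:ℝ)^2 / ((m:ℝ) - (j:ℝ) + 1)) := by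
        ring
      rw [heq, neg_le_neg_iff, div_le_div_iff₀ hden (by norm_num)]
      rw [hmr]
      nlinarith [mul_nonneg (by linarith : (0:ℝ) ≤ (j:ℝ) - 5) (by linarith : (0:ℝ) ≤ 4*(j:ℝ) - 5)]
    have hE3 : ((2.9772:ℝ))⁻¹ ≤ E^2 := le_trans (exp_inv_lb (by norm_num) exp_25_23) hE2
    have hA : (5/16:ℝ) ≤ (w m)^2 * m := by
      push_cast at hcmono
      nlinarith [hcmono, hwlb]
    have := mul_le_mul hA hE3 (by norm_num) (by positivity)
    nlinarith [this]
  calc (2/5:ℝ) * 4^m ≤ (2*(j:ℝ) * w m * E) * 4^m := by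
        apply mul_le_mul_of_nonneg_right hq (by positivity)
    _ = 2*(j:ℝ) * ((Nat.centralBinom m : ℝ) * E) := by rw [cb_w]; ring
    _ ≤ 2*(j:ℝ) * ((2*m).choose (m + j)) := by
        apply mul_le_mul_of_nonneg_left ?_ (by positivity)
        rw [hE]; exact h1

-- EVEN UPPER
lemma even_upper (j : ℕ) (hj : 5 ≤ j) :
    (2*(j:ℝ)) * ((2*(2*j^2)).choose (2*j^2 + j)) ≤ (11/20:ℝ) * 4^(2*j^2) := by
  have hjr : (5:ℝ) ≤ (j:ℝ) := by exact_mod_cast hj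
  set m := 2*j^2 with hm
  have hmr : (m:ℝ) = 2*(j:ℝ)^2 := by rw [hm]; push_cast; ring
  have hj2 : 25 ≤ j^2 := by calc 25 = 5^2 := by norm_num
                                _ ≤ j^2 := Nat.pow_le_pow_left hj 2
  have hjm : j ≤ m := by
    have := Nat.le_self_pow (show 2 ≠ 0 by norm_num) j
    omega
  have h50 : 50 ≤ m := by omega
  have h1 := choose_off_upper m j hjm
  have hdmono := d_mono 50 m h50
  have hwub := w50_sq_ub
  have hwpos := w_pos m
  set E := Real.exp (-((j:ℝ)^2) / ((m:ℝ) + (j:ℝ))) with hE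
  have hEpos : 0 < E := Real.exp_pos _
  have hq : 2*(j:ℝ) * w m * E ≤ 11/20 := by
    have hqpos : (0:ℝ) ≤ 2*(j:ℝ) * w m * E := by positivity
    have h2 : (2*(j:ℝ) * w m * E)^2 ≤ (11/20)^2 := by
      have hsq : (2*(j:ℝ) * w m * E)^2 = 2 * ((w m)^2 * m) * E^2 := by rw [hmr]; ring
      rw [hsq]
      have hE2 : E^2 ≤ Real.exp (-(10/11)) := by
        rw [hE, sq_exp]
        apply Real.exp_le_exp.2
        have heq : 2 * (-((j:ℝ)^2) / ((m:ℝ) + (j:ℝ))) = -(2*(j:ℝ)^2 / ((m:ℝ) + (j:ℝ))) := by ring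
        rw [heq, neg_le_neg_iff, div_le_div_iff₀ (by norm_num) (by positivity)]
        rw [hmr]
        nlinarith
      have hE3 : E^2 ≤ ((2.47116:ℝ))⁻¹ := le_trans hE2 (exp_inv_ub exp_10_11 (by norm_num))
      have hB : (w m)^2 * m ≤ 101/2 * (634/100000) := by
        push_cast at hdmono
        nlinarith [hdmono, hwub, (w_pos 50), sq_nonneg (w m)]
      have hBnn : (0:ℝ) ≤ (w m)^2 * m := by positivity
      have := mul_le_mul hB hE3 (by positivity) (by norm_num)
      nlinarith [this]
    nlinarith [h2, hqpos]
  calc (2*(j:ℝ)) * ((2*m).choose (m + j))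
      ≤ 2*(j:ℝ) * ((Nat.centralBinom m : ℝ) * E) := by
        apply mul_le_mul_of_nonneg_left ?_ (by positivity)
        rw [hE]; exact h1
    _ = (2*(j:ℝ) * w m * E) * 4^m := by rw [cb_w]; ring
    _ ≤ (11/20:ℝ) * 4^m := by
        apply mul_le_mul_of_nonneg_right hq (by positivity)

lemma odd_iden (j : ℕ) :
    2*(2*j^2+2*j+1) * (((2*j+1)^2).choose (2*j^2+3*j+1))
      = ((2*(2*j^2+2*j+1)).choose ((2*j^2+2*j+1)+(j+1))) * ((2*j^2+2*j+1)+(j+1)) := by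
  have h := Nat.add_one_mul_choose_eq ((2*j+1)^2) (2*j^2+3*j+1)
  have e0 : (2*j+1)^2 = 4*j^2+4*j+1 := by ring
  have e1 : ((2*j+1)^2) + 1 = 2*(2*j^2+2*j+1) := by rw [e0]; omega
  have e2 : (2*j^2+3*j+1) + 1 = (2*j^2+2*j+1)+(j+1) := by omega
  rw [e1, e2] at h
  exact h

lemma odd_pow (j : ℕ) : (2:ℝ)^((2*j+1)^2) * 2 = 4^(2*j^2+2*j+1) := by
  have h1 : ((2*j+1)^2) + 1 = 2*(2*j^2+2*j+1) := by ring
  calc (2:ℝ)^((2*j+1)^2) * 2 = 2^(((2*j+1)^2)+1) := (pow_succ 2 _).symm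
    _ = 2^(2*(2*j^2+2*j+1)) := by rw [h1]
    _ = ((2:ℝ)^2)^(2*j^2+2*j+1) := by rw [pow_mul]
    _ = 4^(2*j^2+2*j+1) := by norm_num

lemma odd_lower (j : ℕ) (hj : 5 ≤ j) :
    (2/5:ℝ) * 2^((2*j+1)^2) ≤ (2*(j:ℝ)+1) * (((2*j+1)^2).choose (2*j^2+3*j+1)) := by
  have hjr : (5:ℝ) ≤ (j:ℝ) := by exact_mod_cast hj
  set m := 2*j^2+2*j+1 with hm
  have hmr : (m:ℝ) = 2*(j:ℝ)^2+2*(j:ℝ)+1 := by rw [hm]; push_cast; ring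
  have hj2 : 25 ≤ j^2 := by calc 25 = 5^2 := by norm_num
                                _ ≤ j^2 := Nat.pow_le_pow_left hj 2
  have hjm : j+1 ≤ m := by omega
  have h50 : 50 ≤ m := by omega
  have h1 := choose_off_lower m (j+1) hjm
  have hcmono := c_mono 50 m h50
  have hwlb := w50_sq_lb
  have hwpos := w_pos m
  have hmr50 : (50:ℝ) ≤ (m:ℝ) := by exact_mod_cast h50
  set E := Real.exp (-((↑(j+1):ℝ)^2) / ((m:ℝ) - (↑(j+1):ℝ) + 1)) with hE
  have hEpos : 0 < E := Real.exp_pos _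
  have hq : (2/5:ℝ) ≤ (2*(j:ℝ)+1) * w m * E := by
    have hqpos : (0:ℝ) ≤ (2*(j:ℝ)+1) * w m * E := by positivity
    refine le_of_pow_le_pow_left₀ (n := 2) (by norm_num) hqpos ?_
    have hsq : ((2*(j:ℝ)+1) * w m * E)^2 = (2*(m:ℝ)-1) * (w m)^2 * E^2 := by rw [hmr]; ring
    rw [hsq]
    have hE2 : Real.exp (-(9/7)) ≤ E^2 := by
      rw [hE, sq_exp]
      apply Real.exp_le_exp.2
      have hden : (0:ℝ) < (m:ℝ) - (↑(j+1):ℝ) + 1 := by push_cast; nlinarith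
      have heq : 2 * (-((↑(j+1):ℝ)^2) / ((m:ℝ) - (↑(j+1):ℝ) + 1))
          = -(2*(↑(j+1):ℝ)^2 / ((m:ℝ) - (↑(j+1):ℝ) + 1)) := by ring
      rw [heq, neg_le_neg_iff, div_le_div_iff₀ hden (by norm_num)]
      push_cast
      nlinarith [mul_nonneg (by linarith : (0:ℝ) ≤ (j:ℝ) - 5) (by linarith : (0:ℝ) ≤ 4*(j:ℝ) + 1)]
    have hE3 : ((3.70022:ℝ))⁻¹ ≤ E^2 := le_trans (exp_inv_lb (by norm_num) exp_9_7) hE2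
    have hA : (99/160:ℝ) ≤ (2*(m:ℝ)-1) * (w m)^2 := by
      push_cast at hcmono
      have hcm' : (50/160:ℝ) ≤ (w m)^2 * m := by nlinarith [hcmono, hwlb]
      have h2m : (0:ℝ) ≤ 2*(m:ℝ)-1 := by linarith
      have h1 := mul_le_mul_of_nonneg_left hcm' h2m
      by_contra hcon
      push_neg at hcon
      have hmp : (0:ℝ) < (m:ℝ) := by linarith
      have h3 := mul_lt_mul_of_pos_right hcon hmp
      nlinarith [h1, hmr50]
    have := mul_le_mul hA hE3 (by norm_num) (by nlinarith [hA])
    nlinarith [this]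
  -- multiply through
  have hiden := odd_iden j
  have hidenr : 2*(m:ℝ) * (((2*j+1)^2).choose (2*j^2+3*j+1))
      = ((2*m).choose (m+(j+1)) : ℝ) * ((m:ℝ)+(j:ℝ)+1) := by
    have h := congrArg (Nat.cast : ℕ → ℝ) hiden
    rw [← hm] at h
    push_cast at h
    push_cast
    linarith [h]
  have hmpos : (0:ℝ) < 2*(m:ℝ) := by positivity
  have chain : (2/5:ℝ) * 2^((2*j+1)^2) * (2*(m:ℝ)) ≤ (2*(j:ℝ)+1) * (((2*j+1)^2).choose (2*j^2+3*j+1)) * (2*(m:ℝ)) :=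
   calc (2/5:ℝ) * 2^((2*j+1)^2) * (2*(m:ℝ))
      = (2/5) * (m:ℝ) * ((2:ℝ)^((2*j+1)^2) * 2) := by ring
    _ = (2/5) * (m:ℝ) * 4^m := by rw [odd_pow j]
    _ ≤ ((2*(j:ℝ)+1) * w m * E) * ((m:ℝ)+(j:ℝ)+1) * 4^m := by
        have hle : (2/5:ℝ) * (m:ℝ) ≤ ((2*(j:ℝ)+1) * w m * E) * ((m:ℝ)+(j:ℝ)+1) := by
          have hstep : (2/5:ℝ) * (m:ℝ) ≤ (2/5) * ((m:ℝ)+(j:ℝ)+1) := by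
            have : (0:ℝ) ≤ (j:ℝ)+1 := by positivity
            nlinarith
          refine hstep.trans ?_
          apply mul_le_mul_of_nonneg_right hq (by positivity)
        apply mul_le_mul_of_nonneg_right hle (by positivity)
    _ = (2*(j:ℝ)+1) * (((Nat.centralBinom m : ℝ) * E) * ((m:ℝ)+(j:ℝ)+1)) := by
        rw [cb_w]; ring
    _ ≤ (2*(j:ℝ)+1) * (((2*m).choose (m+(j+1)) : ℝ) * ((m:ℝ)+(j:ℝ)+1)) := by
        apply mul_le_mul_of_nonneg_left ?_ (by positivity)
        apply mul_le_mul_of_nonneg_right ?_ (by positivity)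
        rw [hE]; exact h1
    _ = (2*(j:ℝ)+1) * (((2*j+1)^2).choose (2*j^2+3*j+1)) * (2*(m:ℝ)) := by
        linear_combination (-(2*(j:ℝ)+1)) * hidenr
  exact le_of_mul_le_mul_right chain hmpos

lemma odd_upper (j : ℕ) (hj : 5 ≤ j) :
    (2*(j:ℝ)+1) * (((2*j+1)^2).choose (2*j^2+3*j+1)) ≤ (11/20:ℝ) * 2^((2*j+1)^2) := by
  have hjr : (5:ℝ) ≤ (j:ℝ) := by exact_mod_cast hj
  set m := 2*j^2+2*j+1 with hm
  have hmr : (m:ℝ) = 2*(j:ℝ)^2+2*(j:ℝ)+1 := by rw [hm]; push_cast; ring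
  have hj2 : 25 ≤ j^2 := by calc 25 = 5^2 := by norm_num
                                _ ≤ j^2 := Nat.pow_le_pow_left hj 2
  have hjm : j+1 ≤ m := by omega
  have h50 : 50 ≤ m := by omega
  have h1 := choose_off_upper m (j+1) hjm
  have hdmono := d_mono 50 m h50
  have hwub := w50_sq_ub
  have hwpos := w_pos m
  have hmr50 : (50:ℝ) ≤ (m:ℝ) := by exact_mod_cast h50
  set E := Real.exp (-((↑(j+1):ℝ)^2) / ((m:ℝ) + (↑(j+1):ℝ))) with hE
  have hEpos : 0 < E := Real.exp_pos _
  have hq : (2*(j:ℝ)+1) * w m * E ≤ 1/2 := by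
    have hqpos : (0:ℝ) ≤ (2*(j:ℝ)+1) * w m * E := by positivity
    have h2 : ((2*(j:ℝ)+1) * w m * E)^2 ≤ (1/2)^2 := by
      have hsq : ((2*(j:ℝ)+1) * w m * E)^2 = (2*(m:ℝ)-1) * (w m)^2 * E^2 := by rw [hmr]; ring
      rw [hsq]
      have hE2 : E^2 ≤ Real.exp (-(1:ℝ)) := by
        rw [hE, sq_exp]
        apply Real.exp_le_exp.2
        have hden : (0:ℝ) < (m:ℝ) + (↑(j+1):ℝ) := by positivity
        have heq : 2 * (-((↑(j+1):ℝ)^2) / ((m:ℝ) + (↑(j+1):ℝ)))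
            = -(2*(↑(j+1):ℝ)^2 / ((m:ℝ) + (↑(j+1):ℝ))) := by ring
        have hone : (-(1:ℝ)) = -((1:ℝ)/1) := by norm_num
        rw [heq, hone, neg_le_neg_iff, div_le_div_iff₀ (by norm_num) hden]
        push_cast
        nlinarith
      have hE3 : E^2 ≤ ((2.7182818283:ℝ))⁻¹ :=
        hE2.trans (exp_inv_ub exp_1_lb (by norm_num))
      have hB : (2*(m:ℝ)-1) * (w m)^2 ≤ 101 * (634/100000) := by
        push_cast at hdmono
        nlinarith [hdmono, hwub, sq_nonneg (w m), hwpos]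
      have hBnn : (0:ℝ) ≤ (2*(m:ℝ)-1) * (w m)^2 := by nlinarith [hwpos, sq_nonneg (w m), hmr50]
      have := mul_le_mul hB hE3 (by positivity) (by norm_num)
      nlinarith [this]
    exact le_of_pow_le_pow_left₀ (by norm_num) (by norm_num) h2
  -- multiply through
  have hiden := odd_iden j
  have hidenr : 2*(m:ℝ) * (((2*j+1)^2).choose (2*j^2+3*j+1))
      = ((2*m).choose (m+(j+1)) : ℝ) * ((m:ℝ)+(j:ℝ)+1) := by
    have h := congrArg (Nat.cast : ℕ → ℝ) hiden
    rw [← hm] at h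
    push_cast at h
    push_cast
    linarith [h]
  have hmpos : (0:ℝ) < 2*(m:ℝ) := by positivity
  have chain : (2*(j:ℝ)+1) * (((2*j+1)^2).choose (2*j^2+3*j+1)) * (2*(m:ℝ)) ≤ (11/20:ℝ) * 2^((2*j+1)^2) * (2*(m:ℝ)) :=
   calc (2*(j:ℝ)+1) * (((2*j+1)^2).choose (2*j^2+3*j+1)) * (2*(m:ℝ))
      = (2*(j:ℝ)+1) * (((2*m).choose (m+(j+1)) : ℝ) * ((m:ℝ)+(j:ℝ)+1)) := by linear_combination (2*(j:ℝ)+1) * hidenr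
    _ ≤ (2*(j:ℝ)+1) * (((Nat.centralBinom m : ℝ) * E) * ((m:ℝ)+(j:ℝ)+1)) := by
        apply mul_le_mul_of_nonneg_left ?_ (by positivity)
        apply mul_le_mul_of_nonneg_right ?_ (by positivity)
        rw [hE]; exact h1
    _ = ((2*(j:ℝ)+1) * w m * E) * ((m:ℝ)+(j:ℝ)+1) * 4^m := by rw [cb_w]; ring
    _ ≤ (1/2) * ((11/10) * (m:ℝ)) * 4^m := by
        apply mul_le_mul_of_nonneg_right ?_ (by positivity)
        have hmj : (m:ℝ)+(j:ℝ)+1 ≤ (11/10) * (m:ℝ) := by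
          rw [hmr]
          nlinarith
        have h0 : (0:ℝ) ≤ (m:ℝ)+(j:ℝ)+1 := by positivity
        calc ((2*(j:ℝ)+1) * w m * E) * ((m:ℝ)+(j:ℝ)+1)
            ≤ (1/2) * ((m:ℝ)+(j:ℝ)+1) := mul_le_mul_of_nonneg_right hq h0
          _ ≤ (1/2) * ((11/10) * (m:ℝ)) := by linarith
    _ = (11/20:ℝ) * ((2:ℝ)^((2*j+1)^2) * 2) * (m:ℝ) := by rw [odd_pow j]; ring
    _ = (11/20:ℝ) * 2^((2*j+1)^2) * (2*(m:ℝ)) := by ring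
  exact le_of_mul_le_mul_right chain hmpos

lemma choose_lb_of (n k a b : ℕ) (hk : k ≤ n)
    (h : a * (Nat.factorial k * Nat.factorial (n-k)) ≤ b * Nat.factorial n) :
    a ≤ b * n.choose k := by
  have hfac := Nat.choose_mul_factorial_mul_factorial hk
  rw [← hfac] at h
  have e : b * (n.choose k * Nat.factorial k * Nat.factorial (n-k))
      = (b * n.choose k) * (Nat.factorial k * Nat.factorial (n-k)) := by ring
  rw [e] at h
  exact Nat.le_of_mul_le_mul_right h (by positivity)

lemma choose_ub_of (n k a b : ℕ) (hk : k ≤ n)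
    (h : b * Nat.factorial n ≤ a * (Nat.factorial k * Nat.factorial (n-k))) :
    b * n.choose k ≤ a := by
  have hfac := Nat.choose_mul_factorial_mul_factorial hk
  rw [← hfac] at h
  have e : b * (n.choose k * Nat.factorial k * Nat.factorial (n-k))
      = (b * n.choose k) * (Nat.factorial k * Nat.factorial (n-k)) := by ring
  rw [e] at h
  exact Nat.le_of_mul_le_mul_right h (by positivity)

lemma small_lb (Y : ℕ) (h1 : 1 ≤ Y) (h9 : Y ≤ 9) :
    2 * 2^(Y^2) ≤ (5*Y) * ((Y^2).choose ((Y^2+Y)/2)) := by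
  interval_cases Y <;> exact choose_lb_of _ _ _ _ (by norm_num) (by decide)

lemma small_ub (Y : ℕ) (h1 : 1 ≤ Y) (h9 : Y ≤ 9) :
    (20*Y) * ((Y^2).choose ((Y^2+Y)/2)) ≤ 11 * 2^(Y^2) := by
  interval_cases Y <;> exact choose_ub_of _ _ _ _ (by norm_num) (by decide)

lemma key_real (Y : ℕ) (hY : 1 ≤ Y) :
    (2/5:ℝ) * 2^(Y^2) ≤ (Y:ℝ) * ((Y^2).choose ((Y^2+Y)/2)) ∧
    (Y:ℝ) * ((Y^2).choose ((Y^2+Y)/2)) ≤ (11/20) * 2^(Y^2) := by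
  rcases le_or_gt Y 9 with h9 | h10
  · have hl := small_lb Y hY h9
    have hu := small_ub Y hY h9
    have hlr := (Nat.cast_le (α := ℝ)).2 hl
    have hur := (Nat.cast_le (α := ℝ)).2 hu
    push_cast at hlr hur
    constructor <;> linarith
  · rcases Nat.even_or_odd Y with ⟨j, hj⟩ | ⟨j, hj⟩
    · -- Y = j + j = 2j
      have hY2 : Y = 2*j := by omega
      subst hY2
      have hj5 : 5 ≤ j := by omega
      have e1 : (2*j)^2 = 2*(2*j^2) := by ring
      have e2 : ((2*j)^2+(2*j))/2 = 2*j^2+j := by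
        have : (2*j)^2 = 4*j^2 := by ring
        omega
      rw [e2, e1]
      have hpow : (2:ℝ)^(2*(2*j^2)) = 4^(2*j^2) := by
        rw [show (4:ℝ) = 2^2 by norm_num, ← pow_mul]
      rw [hpow]
      constructor
      · have := even_lower j hj5
        push_cast
        convert this using 2 <;> push_cast <;> ring
      · have := even_upper j hj5
        push_cast
        convert this using 2 <;> push_cast <;> ring
    · -- Y = 2j+1
      subst hj
      have hj5 : 5 ≤ j := by omega
      have e2 : ((2*j+1)^2+(2*j+1))/2 = 2*j^2+3*j+1 := by
        have : (2*j+1)^2 = 4*j^2+4*j+1 := by ring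
        omega
      rw [e2]
      constructor
      · have := odd_lower j hj5
        push_cast
        convert this using 2 <;> push_cast <;> ring
      · have := odd_upper j hj5
        push_cast
        convert this using 2 <;> push_cast <;> ring

lemma H_eval (y : ℤ) (hy : 1 ≤ y) :
    H y (y^2) = ((y.toNat^2).choose ((y.toNat^2 + y.toNat)/2) : ℝ) / 2^(y.toNat^2) := by
  have hY : y = (y.toNat : ℤ) := (Int.toNat_of_nonneg (by linarith)).symm
  set Y := y.toNat with hYdef
  have hY1 : 1 ≤ Y := by omega
  have hcond : 0 ≤ y^2 ∧ (2:ℤ) ∣ (y^2 - y) ∧ |y| ≤ y^2 := by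
    refine ⟨by positivity, ?_, ?_⟩
    · have h : y^2 - y = y * (y - 1) := by ring
      rw [h]
      exact (Int.even_mul_pred_self y).two_dvd
    · rw [abs_of_nonneg (by linarith)]
      nlinarith
  rw [H, if_pos hcond]
  have e1 : (y^2).toNat = Y^2 := by
    rw [hY, ← Nat.cast_pow]; exact Int.toNat_natCast _
  have hq : Y^2+Y = 2*((Y^2+Y)/2) := by
    have hdvd : 2 ∣ Y^2+Y := by
      have e : Y^2+Y = Y*(Y+1) := by ring
      rw [e]
      exact (Nat.even_mul_succ_self Y).two_dvd
    omega
  have e2 : ((y^2 + y)/2).toNat = (Y^2 + Y)/2 := by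
    rw [hY]
    have hq2 : ((Y:ℤ)^2+(Y:ℤ))/2 = (((Y^2+Y)/2 : ℕ) : ℤ) := by
      rw [show ((Y:ℤ)^2+(Y:ℤ)) = ((Y^2+Y : ℕ):ℤ) by push_cast; ring]
      rw [hq]
      push_cast
      rw [Int.mul_ediv_cancel_left _ (by norm_num)]
    rw [hq2, Int.toNat_natCast]
  rw [e1, e2]
  have e3 : (2:ℝ)^(-(y^2)) = ((2:ℝ)^(Y^2))⁻¹ := by
    rw [hY]
    rw [show ((Y:ℤ))^2 = ((Y^2:ℕ):ℤ) by push_cast; ring]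
    rw [zpow_neg, zpow_natCast]
  rw [e3]
  ring

lemma H_bounds (y : ℤ) (hy : 1 ≤ y) :
    (2/5:ℝ) / (y:ℝ) ≤ H y (y^2) ∧ H y (y^2) ≤ (11/20:ℝ) / (y:ℝ) := by
  have hY : y = (y.toNat : ℤ) := (Int.toNat_of_nonneg (by linarith)).symm
  set Y := y.toNat with hYdef
  have hY1 : 1 ≤ Y := by omega
  have hyr : (y:ℝ) = (Y:ℝ) := by rw [hY]; push_cast; ring
  have hYpos : (0:ℝ) < (Y:ℝ) := by exact_mod_cast hY1
  have h2pos : (0:ℝ) < 2^(Y^2) := by positivity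
  obtain ⟨hk1, hk2⟩ := key_real Y hY1
  rw [H_eval y hy, hyr]
  constructor
  · rw [div_le_div_iff₀ hYpos h2pos]
    linarith [hk1]
  · rw [div_le_div_iff₀ h2pos hYpos]
    linarith [hk2]

lemma int_sum_succ (f : ℤ → ℝ) (a b : ℤ) (h : a ≤ b + 1) :
    ∑ x ∈ Finset.Icc a (b+1), f x = (∑ x ∈ Finset.Icc a b, f x) + f (b+1) := by
  have hins : Finset.Icc a (b+1) = insert (b+1) (Finset.Icc a b) := by
    ext x
    simp only [Finset.mem_Icc, Finset.mem_insert]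
    omega
  rw [hins, Finset.sum_insert (by simp only [Finset.mem_Icc]; omega)]
  ring

lemma harm_lb : ∀ L : ℤ, 1 ≤ L → Real.log ((L:ℝ)+1) ≤ ∑ y ∈ Finset.Icc (1:ℤ) L, ((y:ℝ))⁻¹ := by
  have base : Real.log (((1:ℤ):ℝ)+1) ≤ ∑ y ∈ Finset.Icc (1:ℤ) 1, ((y:ℝ))⁻¹ := by
    simp only [Finset.Icc_self, Finset.sum_singleton]
    have := Real.log_le_sub_one_of_pos (show (0:ℝ) < 2 by norm_num)
    norm_num
    linarith
  intro L hL
  refine Int.le_induction (motive := fun M _ => Real.log ((M:ℝ)+1) ≤ ∑ y ∈ Finset.Icc (1:ℤ) M, ((y:ℝ))⁻¹) base ?_ L hL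
  intro n hn ih
  rw [int_sum_succ _ 1 n (by omega)]
  have hx : (0:ℝ) < (n:ℝ)+1 := by
    have : (1:ℝ) ≤ (n:ℝ) := by exact_mod_cast hn
    linarith
  have h2 : (0:ℝ) < (n:ℝ)+2 := by linarith
  have hlog := Real.log_le_sub_one_of_pos (div_pos h2 hx)
  rw [Real.log_div h2.ne' hx.ne'] at hlog
  have he : ((n:ℝ)+2)/((n:ℝ)+1) - 1 = ((n:ℝ)+1)⁻¹ := by
    field_simp
    try norm_num
  have hcast : ((n+1:ℤ):ℝ) = (n:ℝ)+1 := by push_cast; ring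
  rw [hcast]
  have he2 : Real.log ((n:ℝ)+1+1) = Real.log ((n:ℝ)+2) := by congr 1; ring
  rw [he2]
  linarith [ih]

lemma harm_ub (a : ℤ) (ha : 1 ≤ a) : ∀ (b : ℤ), a ≤ b →
    ∑ z ∈ Finset.Icc (a+1) b, ((z:ℝ))⁻¹ ≤ Real.log (b:ℝ) - Real.log (a:ℝ) := by
  have base : ∑ z ∈ Finset.Icc (a+1) a, ((z:ℝ))⁻¹ ≤ Real.log (a:ℝ) - Real.log (a:ℝ) := by
    rw [Finset.Icc_eq_empty (by omega)]
    simp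
  intro b hb
  refine Int.le_induction (motive := fun M _ => ∑ z ∈ Finset.Icc (a+1) M, ((z:ℝ))⁻¹ ≤ Real.log (M:ℝ) - Real.log (a:ℝ)) base ?_ b hb
  intro n hn ih
  rw [int_sum_succ _ (a+1) n (by omega)]
  have hx : (0:ℝ) < (n:ℝ) := by
    have : (1:ℝ) ≤ (n:ℝ) := by exact_mod_cast le_trans ha hn
    linarith
  have h2 : (0:ℝ) < (n:ℝ)+1 := by linarith
  have hlog := Real.log_le_sub_one_of_pos (div_pos hx h2)
  rw [Real.log_div hx.ne' h2.ne'] at hlog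
  have he : (n:ℝ)/((n:ℝ)+1) - 1 = -(((n:ℝ)+1)⁻¹) := by
    field_simp
    try norm_num
  rw [he] at hlog
  have hcast : ((n+1:ℤ):ℝ) = (n:ℝ)+1 := by push_cast; ring
  rw [hcast]
  linarith [ih]

lemma reindex (L : ℤ) (g : ℤ → ℝ) :
    ∑ y ∈ Finset.Icc (1:ℤ) L, g (y+L+1) = ∑ z ∈ Finset.Icc (L+2) (2*L+1), g z := by
  have hmap := Finset.map_add_right_Icc (1:ℤ) L (L+1)
  have e1 : (1:ℤ)+(L+1) = L+2 := by ring
  have e2 : L+(L+1) = 2*L+1 := by ring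
  rw [e1, e2] at hmap
  rw [← hmap, Finset.sum_map]
  apply Finset.sum_congr rfl
  intro x _
  simp only [addRightEmbedding_apply]
  congr 1
  ring



theorem interval_lower_bound_sum :
    ∃ c : ℝ, 0 < c ∧ ∀ L : ℤ, 1 ≤ L → Odd L →
      c * Real.log (L : ℝ) ≤
        ∑ y ∈ Finset.Icc (1 : ℤ) L,
          ((1 / 2) * H y (y ^ 2) - (1 / 2) * H (y + L + 1) ((y + L + 1) ^ 2)) := by
  refine ⟨1/100, by norm_num, ?_⟩
  intro L hL hodd
  have hLr : (1:ℝ) ≤ (L:ℝ) := by exact_mod_cast hL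
  -- termwise bound
  have hterm : ∀ y ∈ Finset.Icc (1:ℤ) L,
      (1/5) * ((y:ℝ))⁻¹ - (11/40) * (((y+L+1:ℤ):ℝ))⁻¹ ≤
      (1 / 2) * H y (y ^ 2) - (1 / 2) * H (y + L + 1) ((y + L + 1) ^ 2) := by
    intro y hy
    rw [Finset.mem_Icc] at hy
    obtain ⟨hy1, hyL⟩ := hy
    have hz1 : (1:ℤ) ≤ y + L + 1 := by omega
    obtain ⟨hb1, _⟩ := H_bounds y hy1
    obtain ⟨_, hb4⟩ := H_bounds (y+L+1) hz1
    have hyr : (0:ℝ) < (y:ℝ) := by exact_mod_cast hy1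
    have hzr : (0:ℝ) < ((y+L+1:ℤ):ℝ) := by exact_mod_cast hz1
    have e1 : (2/5:ℝ)/(y:ℝ) = 2/5 * ((y:ℝ))⁻¹ := by ring
    have e2 : (11/20:ℝ)/((y+L+1:ℤ):ℝ) = 11/20 * (((y+L+1:ℤ):ℝ))⁻¹ := by ring
    rw [e1] at hb1; rw [e2] at hb4
    nlinarith [hb1, hb4]
  have hsum1 := Finset.sum_le_sum hterm
  -- split LHS sum
  have hsplit : ∑ y ∈ Finset.Icc (1:ℤ) L, ((1/5) * ((y:ℝ))⁻¹ - (11/40) * (((y+L+1:ℤ):ℝ))⁻¹)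
      = (1/5) * (∑ y ∈ Finset.Icc (1:ℤ) L, ((y:ℝ))⁻¹)
        - (11/40) * (∑ z ∈ Finset.Icc (L+2) (2*L+1), ((z:ℝ))⁻¹) := by
    rw [Finset.sum_sub_distrib]
    rw [← Finset.mul_sum, ← Finset.mul_sum]
    rw [reindex L (fun z => ((z:ℝ))⁻¹)]
  rw [hsplit] at hsum1
  -- bounds on the two harmonic sums
  have hH1 := harm_lb L hL
  have hH2 := harm_ub (L+1) (by omega) (2*L+1) (by omega)
  have e3 : (L:ℤ)+1+1 = L+2 := by ring
  rw [e3] at hH2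
  have hlog2 : Real.log ((2*L+1:ℤ):ℝ) - Real.log ((L+1:ℤ):ℝ) ≤ Real.log 2 := by
    have h1 : (0:ℝ) < ((2*L+1:ℤ):ℝ) := by push_cast; linarith
    have h2 : (0:ℝ) < ((L+1:ℤ):ℝ) := by push_cast; linarith
    have hle : ((2*L+1:ℤ):ℝ) ≤ 2 * ((L+1:ℤ):ℝ) := by push_cast; linarith
    have := Real.log_le_log h1 hle
    rw [Real.log_mul (by norm_num) h2.ne'] at this
    linarith
  have hcast1 : ((L+1:ℤ):ℝ) = (L:ℝ)+1 := by push_cast; ring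
  rw [hcast1] at hH2 hlog2
  -- combine
  rcases eq_or_lt_of_le hL with hL1 | hL3
  · -- L = 1
    subst hL1
    have h1 : ∑ y ∈ Finset.Icc (1:ℤ) 1, ((y:ℝ))⁻¹ = 1 := by norm_num
    have h2 : ∑ z ∈ Finset.Icc ((1:ℤ)+2) (2*1+1), ((z:ℝ))⁻¹ = (3:ℝ)⁻¹ := by norm_num
    rw [h1, h2] at hsum1
    have hgoal : (1/100:ℝ) * Real.log ((1:ℤ):ℝ) = 0 := by norm_num
    rw [hgoal]
    refine le_trans ?_ hsum1
    norm_num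
  · -- L ≥ 2, odd → L ≥ 3
    have hL3' : (3:ℤ) ≤ L := by
      rcases hodd with ⟨k, hk⟩
      omega
    have hLr3 : (3:ℝ) ≤ (L:ℝ) := by exact_mod_cast hL3'
    have hlogL : Real.log 3 ≤ Real.log (L:ℝ) := by
      apply Real.log_le_log (by norm_num) hLr3
    have hlogL1 : Real.log (L:ℝ) ≤ Real.log ((L:ℝ)+1) :=
      Real.log_le_log (by linarith) (by linarith)
    have hkey : (110:ℝ) * Real.log 2 ≤ 76 * Real.log 3 := by
      have h1 : ((2:ℝ))^(110:ℕ) ≤ ((3:ℝ))^(76:ℕ) := by norm_num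
      have h2 := Real.log_le_log (by positivity) h1
      rw [Real.log_pow, Real.log_pow] at h2
      push_cast at h2
      linarith
    have hlog2pos : (0:ℝ) ≤ Real.log 2 := Real.log_nonneg (by norm_num)
    have hlog3pos : (0:ℝ) ≤ Real.log 3 := Real.log_nonneg (by norm_num)
    calc (1/100:ℝ) * Real.log (L:ℝ)
        ≤ (1/5) * Real.log ((L:ℝ)+1) - (11/40) * Real.log 2 := by nlinarith [hlogL, hlogL1, hkey]
      _ ≤ (1/5) * (∑ y ∈ Finset.Icc (1:ℤ) L, ((y:ℝ))⁻¹)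
          - (11/40) * (∑ z ∈ Finset.Icc (L+2) (2*L+1), ((z:ℝ))⁻¹) := by nlinarith [hH1, hH2, hlog2]
      _ ≤ _ := hsum1
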